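/- Suppose 0 < R < 1 and suppose g : (0,∞) → (0,∞) is twice differentiable with g' > 0, satisfying (1-R)g(z)·z²g''(z) + R(zg'(z))² ≤ 0 for all z ∈ (0, z*), and satisfying g(z*) = m*(1+z*)^{1-R} and z*g'(z*) = m*(1-R)(1+z*)^{-R}·z* for some m* > 0 and z* > 0. Define ψ(z) = (1+z)/(1-R) - g(z)/g'(z). Then ψ(z*) = 0, ψ'(z) = R/(1-R) + g(z)g''(z)/g'(z)² ≤ 0 on (0,z*), and hence ψ(z) ≥ 0 for all z ∈ (0, z*]. -/

import Mathlib

lemma stmt11_sign_aux (R a b c : ℝ) (h1R : 0 < 1 - R) (hb : 0 < b)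
    (h2 : (1 - R) * a * c + R * b ^ 2 ≤ 0) : R / (1 - R) + a * c / b ^ 2 ≤ 0 := by
  have heq : R / (1 - R) + a * c / b ^ 2
      = ((1 - R) * a * c + R * b ^ 2) / ((1 - R) * b ^ 2) := by
    field_simp
    ring
  rw [heq]
  exact div_nonpos_of_nonpos_of_nonneg h2 (by positivity)

/-- monotonicity of ψ(z) = (1+z)/(1-R) - g(z)/g'(z) and the
resulting nonnegativity (the variational inequality MG ≥ 0). -/
theorem stmt11 (R mstar zstar : ℝ) (hR0 : 0 < R) (hR1 : R < 1)
    (hmstar : 0 < mstar) (hzstar : 0 < zstar)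
    (g : ℝ → ℝ) (hgpos : ∀ z > (0 : ℝ), 0 < g z) (hg' : ∀ z > (0 : ℝ), 0 < deriv g z)
    (hdiff : ∀ z > (0 : ℝ), HasDerivAt g (deriv g z) z)
    (hdiff2 : ∀ z > (0 : ℝ), HasDerivAt (deriv g) (deriv (deriv g) z) z)
    (hineq : ∀ z ∈ Set.Ioo (0 : ℝ) zstar,
      (1 - R) * g z * (z ^ 2 * deriv (deriv g) z) + R * (z * deriv g z) ^ 2 ≤ 0)
    (hval : g zstar = mstar * (1 + zstar) ^ (1 - R))
    (hsmooth : zstar * deriv g zstar = mstar * (1 - R) * (1 + zstar) ^ (-R) * zstar)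
    (ψ : ℝ → ℝ) (hψ : ∀ z, ψ z = (1 + z) / (1 - R) - g z / deriv g z) :
    ψ zstar = 0 ∧
    (∀ z ∈ Set.Ioo (0 : ℝ) zstar,
      deriv ψ z = R / (1 - R) + g z * deriv (deriv g) z / (deriv g z) ^ 2 ∧
      deriv ψ z ≤ 0) ∧
    (∀ z ∈ Set.Ioc (0 : ℝ) zstar, 0 ≤ ψ z) := by
  have h1R : (0:ℝ) < 1 - R := by linarith
  have hz1 : (0:ℝ) < 1 + zstar := by linarith
  have hψfun : ψ = fun z => (1 + z) / (1 - R) - g z / deriv g z := funext hψ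
  -- derivative of ψ at any z > 0
  have hψD : ∀ z > (0:ℝ), HasDerivAt ψ
      (R / (1 - R) + g z * deriv (deriv g) z / (deriv g z) ^ 2) z := by
    intro z hz
    have hg'ne : deriv g z ≠ 0 := ne_of_gt (hg' z hz)
    have h1 : HasDerivAt (fun z : ℝ => (1 + z) / (1 - R)) (1 / (1 - R)) z := by
      simpa using ((hasDerivAt_id z).const_add 1).div_const (1 - R)
    have h2 := (hdiff z hz).div (hdiff2 z hz) hg'ne
    have h := h1.sub h2
    rw [hψfun]
    refine h.congr_deriv ?_
    field_simp
    ring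
  -- ψ zstar = 0
  have hg'star : deriv g zstar = mstar * (1 - R) * (1 + zstar) ^ (-R) :=
    mul_right_cancel₀ (ne_of_gt hzstar) (by linarith [hsmooth])
  have hpow : (1 + zstar) ^ (1 - R) = (1 + zstar) * (1 + zstar) ^ (-R) := by
    rw [show (1 : ℝ) - R = 1 + (-R) by ring, Real.rpow_add hz1, Real.rpow_one]
  have hppos : (0:ℝ) < (1 + zstar) ^ (-R) := Real.rpow_pos_of_pos hz1 _
  have hψz : ψ zstar = 0 := by
    rw [hψ, hval, hg'star, hpow]
    field_simp
    ring
  refine ⟨hψz, ?_, ?_⟩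
  · intro z hz
    obtain ⟨hz0, hzs⟩ := hz
    have hd := hψD z hz0
    have hde : deriv ψ z = R / (1 - R) + g z * deriv (deriv g) z / (deriv g z) ^ 2 :=
      hd.deriv
    refine ⟨hde, ?_⟩
    rw [hde]
    have hkey := hineq z ⟨hz0, hzs⟩
    have hg'pos := hg' z hz0
    have hgp := hgpos z hz0
    -- (1-R) g g'' + R g'^2 ≤ 0
    have h2 : (1 - R) * g z * deriv (deriv g) z + R * (deriv g z) ^ 2 ≤ 0 := by
      nlinarith [sq_nonneg z, mul_pos hz0 hz0]
    exact stmt11_sign_aux R (g z) (deriv g z) (deriv (deriv g) z) h1R hg'pos h2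
  · intro z hz
    obtain ⟨hz0, hzs⟩ := hz
    rcases eq_or_lt_of_le hzs with h | h
    · rw [h, hψz]
    · have hanti : AntitoneOn ψ (Set.Icc z zstar) := by
        apply antitoneOn_of_deriv_nonpos (convex_Icc z zstar)
        · intro x hx
          exact ((hψD x (lt_of_lt_of_le hz0 hx.1)).differentiableAt).continuousAt.continuousWithinAt
        · intro x hx
          rw [interior_Icc] at hx
          exact ((hψD x (lt_trans hz0 hx.1)).differentiableAt).differentiableWithinAt
        · intro x hx
          rw [interior_Icc] at hx
          have := (hψD x (lt_trans hz0 hx.1)).deriv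
          rw [this]
          have hkey := hineq x ⟨lt_trans hz0 hx.1, hx.2⟩
          have hg'pos := hg' x (lt_trans hz0 hx.1)
          have hgp := hgpos x (lt_trans hz0 hx.1)
          have hx0 : (0:ℝ) < x := lt_trans hz0 hx.1
          have h2 : (1 - R) * g x * deriv (deriv g) x + R * (deriv g x) ^ 2 ≤ 0 := by
            nlinarith [mul_pos hx0 hx0]
          exact stmt11_sign_aux R (g x) (deriv g x) (deriv (deriv g) x) h1R hg'pos h2
      have := hanti (Set.left_mem_Icc.mpr (le_of_lt h)) (Set.right_mem_Icc.mpr (le_of_lt h)) (le_of_lt h)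
      rw [hψz] at this
      exact this
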